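/- Fix integers n ≥ 1, 0 ≤ q ≤ n and 1 ≤ j₁ < … < j_q ≤ n, set p = n + 1 − q, and let φ_{n,j₁…j_q} ∈ ℚ[[x_{i,l} : 1 ≤ i ≤ p, l ∈ ℤⁿ]] be the power series determined by the compatible system (φ^{(M′,d)}) described in the context. Assign to the variable x_{i,l} the weight l ∈ ℤⁿ and to a monomial ∏ x_{i,l}^{e_{i,l}} the weight Σ e_{i,l}·l ∈ ℤⁿ. Then every monomial occurring with nonzero coefficient in φ_{n,j₁…j_q} has weight 0 ∈ ℤⁿ. -/

import Mathlib

noncomputable section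

open scoped Classical TensorProduct

/-- Iterated Laurent series carrier together with its ring structure. -/
def IterAux (A : Type) [CommRing A] : ℕ → (T : Type) × CommRing T
  | 0 => ⟨A, inferInstance⟩
  | n+1 =>
    letI := (IterAux A n).2
    ⟨LaurentSeries (IterAux A n).1, inferInstance⟩

/-- `IterLaurent A n = A((t₁))…((tₙ))`, the ring of iterated Laurent series:
`IterLaurent A 0 = A` and `IterLaurent A (n+1) = (IterLaurent A n)((t_{n+1}))`. -/
def IterLaurent (A : Type) [CommRing A] (n : ℕ) : Type := (IterAux A n).1

instance iterLaurentCommRing (A : Type) [CommRing A] (n : ℕ) : CommRing (IterLaurent A n) :=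
  (IterAux A n).2

/-- View an iterated Laurent series as a Laurent series over the previous stage. -/
def IterLaurent.down {A : Type} [CommRing A] {n : ℕ} (f : IterLaurent A (n+1)) :
    LaurentSeries (IterLaurent A n) := f

/-- View a Laurent series over the previous stage as an iterated Laurent series. -/
def IterLaurent.up {A : Type} [CommRing A] {n : ℕ} (f : LaurentSeries (IterLaurent A n)) :
    IterLaurent A (n+1) := f

/-- The coefficient of `t^l = t₁^{l₁}⋯tₙ^{lₙ}` in an iterated Laurent series. -/
def iterCoeff (A : Type) [CommRing A] : {n : ℕ} → IterLaurent A n → (Fin n → ℤ) → A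
  | 0, f, _ => f
  | n+1, f, l => iterCoeff A (f.down.coeff (l (Fin.last n))) (fun i => l i.castSucc)

/-- The lexicographic order on `ℤⁿ` "from the last coordinate":
`l < l'` iff `lₙ < l'ₙ`, or `lₙ = l'ₙ` and `(l₁,…,l_{n-1}) < (l'₁,…,l'_{n-1})`. -/
def lexLt : {n : ℕ} → (Fin n → ℤ) → (Fin n → ℤ) → Prop
  | 0, _, _ => False
  | n+1, a, b => a (Fin.last n) < b (Fin.last n) ∨
      (a (Fin.last n) = b (Fin.last n) ∧
        lexLt (fun i => a i.castSucc) (fun i => b i.castSucc))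

/-- The monomial `t^l = t₁^{l₁} ⋯ tₙ^{lₙ}`. -/
def tpow (A : Type) [CommRing A] : {n : ℕ} → (Fin n → ℤ) → IterLaurent A n
  | 0, _ => 1
  | n+1, l => IterLaurent.up
      (HahnSeries.single (l (Fin.last n)) (tpow A (fun i => l i.castSucc)))

/-- Constant series, as a ring homomorphism `A →+* A((t₁))…((tₙ))`. -/
def iterC (A : Type) [CommRing A] : (n : ℕ) → A →+* IterLaurent A n
  | 0 => RingHom.id A
  | n+1 => (HahnSeries.C : (IterLaurent A n) →+* LaurentSeries (IterLaurent A n)).comp (iterC A n)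

/-- The truncation `f₋ = Σ_{l<0} coeff_l(f) t^l` (strictly negative part w.r.t. the
lexicographic order from the last coordinate). -/
def truncNeg (A : Type) [CommRing A] : {n : ℕ} → IterLaurent A n → IterLaurent A n
  | 0, _ => 0
  | n+1, f => IterLaurent.up
      { coeff := fun k =>
          if k < 0 then f.down.coeff k else if k = 0 then truncNeg A (f.down.coeff 0) else 0
        isPWO_support' := by
          refine (f.down.isPWO_support.union (Set.finite_singleton 0).isPWO).mono ?_
          intro k hk
          simp only [Function.mem_support] at hk
          rcases lt_trichotomy k 0 with h | h | h
          · left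
            simp only [if_pos h] at hk
            exact hk
          · right; simp [h]
          · exfalso; apply hk; rw [if_neg (not_lt.2 h.le), if_neg h.ne'] }

/-- The truncation `f_{≤0} = Σ_{l≤0} coeff_l(f) t^l` (nonpositive part). -/
def truncNonpos (A : Type) [CommRing A] : {n : ℕ} → IterLaurent A n → IterLaurent A n
  | 0, f => f
  | n+1, f => IterLaurent.up
      { coeff := fun k =>
          if k < 0 then f.down.coeff k else if k = 0 then truncNonpos A (f.down.coeff 0) else 0
        isPWO_support' := by
          refine (f.down.isPWO_support.union (Set.finite_singleton 0).isPWO).mono ?_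
          intro k hk
          simp only [Function.mem_support] at hk
          rcases lt_trichotomy k 0 with h | h | h
          · left
            simp only [if_pos h] at hk
            exact hk
          · right; simp [h]
          · exfalso; apply hk; rw [if_neg (not_lt.2 h.le), if_neg h.ne'] }

/-- `V₊(A)`: iterated Laurent series with constant term `1` and no nonzero
coefficients below `0`. -/
def MemVplus (A : Type) [CommRing A] {n : ℕ} (f : IterLaurent A n) : Prop :=
  iterCoeff A f 0 = 1 ∧ ∀ l, lexLt l 0 → iterCoeff A f l = 0

/-- `V₋(A)`: iterated Laurent series with constant term `1`, no nonzero coefficients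
above `0`, and `f - 1` nilpotent in `Lⁿ(A)`. -/
def MemVminus (A : Type) [CommRing A] {n : ℕ} (f : IterLaurent A n) : Prop :=
  iterCoeff A f 0 = 1 ∧ (∀ l, lexLt 0 l → iterCoeff A f l = 0) ∧ IsNilpotent (f - 1)

/-- `(Lⁿ𝔾ₘ)⁰(A)`: invertible constant term and nilpotent strictly negative part. -/
def MemZeroMul (A : Type) [CommRing A] {n : ℕ} (f : IterLaurent A n) : Prop :=
  IsUnit (iterCoeff A f 0) ∧ IsNilpotent (truncNeg A f)

/-- `(Lⁿ𝔾ₘ)^♯(A)`: constant term `1 + nilpotent` and nilpotent strictly negative part. -/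
def MemSharpMul (A : Type) [CommRing A] {n : ℕ} (f : IterLaurent A n) : Prop :=
  IsNilpotent (iterCoeff A f 0 - 1) ∧ IsNilpotent (truncNeg A f)

/-- `(Lⁿ𝔾ₐ)^♯(A)`: nilpotent nonpositive part. -/
def MemSharpAdd (A : Type) [CommRing A] {n : ℕ} (g : IterLaurent A n) : Prop :=
  IsNilpotent (truncNonpos A g)

/-- The residue: the coefficient of `t₁⁻¹⋯tₙ⁻¹`. -/
def iterRes (A : Type) [CommRing A] {n : ℕ} (f : IterLaurent A n) : A :=
  iterCoeff A f (fun _ => -1)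

/-- The derivative with respect to the outer Laurent variable:
`coeff k ↦ (k+1) • coeff (k+1)`. -/
def hahnDerivHom (B : Type) [CommRing B] : LaurentSeries B →+ LaurentSeries B where
  toFun f :=
    { coeff := fun k => (k + 1) • f.coeff (k + 1)
      isPWO_support' := by
        have himg : (Function.support fun k : ℤ => (k + 1) • f.coeff (k + 1)) ⊆
            (fun k : ℤ => k - 1) '' f.support := by
          intro k hk
          simp only [Function.mem_support] at hk
          refine ⟨k + 1, ?_, by ring⟩
          intro h0
          apply hk
          rw [h0, smul_zero]
        exact (f.isPWO_support.image_of_monotone (fun a b hab => by omega)).mono himg }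
  map_zero' := by ext k; simp
  map_add' f g := by ext k; simp [smul_add]

/-- Coefficientwise application of an additive map, on Laurent series. -/
def hahnMapHom {B C : Type} [CommRing B] [CommRing C] (φ : B →+ C) :
    HahnSeries ℤ B →+ HahnSeries ℤ C where
  toFun f := f.map φ
  map_zero' := by ext; simp
  map_add' f g := by ext; simp

/-- The formal partial derivative `∂/∂tⱼ` as an additive map: it is characterized by
`coeff_l (∂f/∂tⱼ) = (lⱼ + 1) • coeff_{l + eⱼ} f`. -/
def pderivHom (A : Type) [CommRing A] : {n : ℕ} → Fin n → (IterLaurent A n →+ IterLaurent A n)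
  | 0, j => j.elim0
  | n+1, j =>
    show HahnSeries ℤ (IterLaurent A n) →+ HahnSeries ℤ (IterLaurent A n) from
    if h : (j : ℕ) < n then
      hahnMapHom (B := IterLaurent A n) (C := IterLaurent A n) (pderivHom A (⟨j, h⟩ : Fin n))
    else hahnDerivHom (IterLaurent A n)

/-- The formal partial derivative `∂f/∂tⱼ` of an iterated Laurent series. -/
def pderivIter (A : Type) [CommRing A] {n : ℕ} (j : Fin n) (f : IterLaurent A n) :
    IterLaurent A n := pderivHom A j f

/-- Coefficientwise application of a ring homomorphism, on Laurent series. -/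
def hahnMapRingHom {B C : Type} [CommRing B] [CommRing C] (φ : B →+* C) :
    HahnSeries ℤ B →+* HahnSeries ℤ C where
  toFun f := f.map φ
  map_one' := by
    ext g
    by_cases h : g = 0 <;> simp [h]
  map_mul' x y := by
    have h := HahnSeries.map_mul (Γ := ℤ) (f := (φ : B →ₙ+* C)) (x := x) (y := y)
    ext g
    have := congrArg (fun z : HahnSeries ℤ C => z.coeff g) h
    exact this
  map_zero' := by ext; simp
  map_add' x y := by ext; simp

/-- The ring homomorphism `Lⁿ(A) →+* Lⁿ(B)` induced by `σ : A →+* B`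
(functoriality of iterated Laurent series). -/
def iterMap {A B : Type} [CommRing A] [CommRing B] (σ : A →+* B) :
    (n : ℕ) → (IterLaurent A n →+* IterLaurent B n)
  | 0 => σ
  | n+1 =>
    show HahnSeries ℤ (IterLaurent A n) →+* HahnSeries ℤ (IterLaurent B n) from
    hahnMapRingHom (B := IterLaurent A n) (C := IterLaurent B n) (iterMap σ n)

theorem tpow_zero (A : Type) [CommRing A] : ∀ {n : ℕ}, tpow A (0 : Fin n → ℤ) = 1
  | 0 => rfl
  | n+1 => by
    show IterLaurent.up (HahnSeries.single ((0 : Fin (n+1) → ℤ) (Fin.last n))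
      (tpow A fun i => (0 : Fin (n+1) → ℤ) i.castSucc)) = 1
    have h1 : (fun i : Fin n => (0 : Fin (n+1) → ℤ) i.castSucc) = (0 : Fin n → ℤ) := rfl
    rw [h1, tpow_zero A]
    exact congrArg IterLaurent.up (HahnSeries.single_zero_one)

theorem tpow_mul_tpow (A : Type) [CommRing A] :
    ∀ {n : ℕ} (l l' : Fin n → ℤ), tpow A l * tpow A l' = tpow A (l + l')
  | 0, _, _ => one_mul 1
  | n+1, l, l' => by
    show IterLaurent.up (HahnSeries.single (l (Fin.last n)) (tpow A fun i => l i.castSucc) *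
        HahnSeries.single (l' (Fin.last n)) (tpow A fun i => l' i.castSucc)) = _
    rw [HahnSeries.single_mul_single, tpow_mul_tpow A]
    rfl

/-- The variable `tᵢ` as a unit of `Lⁿ(A)`. -/
def tUnit (A : Type) [CommRing A] (n : ℕ) (i : Fin n) : (IterLaurent A n)ˣ where
  val := tpow A (fun j => if j = i then 1 else 0)
  inv := tpow A (fun j => if j = i then -1 else 0)
  val_inv := by
    rw [tpow_mul_tpow A]
    have : ((fun j : Fin n => if j = i then (1:ℤ) else 0) + fun j => if j = i then -1 else 0)
        = 0 := by funext j; by_cases h : j = i <;> simp [h]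
    rw [this, tpow_zero A]
  inv_val := by
    rw [tpow_mul_tpow A]
    have : ((fun j : Fin n => if j = i then (-1:ℤ) else 0) + fun j => if j = i then 1 else 0)
        = 0 := by funext j; by_cases h : j = i <;> simp [h]
    rw [this, tpow_zero A]

/-- A unit of `A` as a constant unit of `Lⁿ(A)`. -/
def constUnit (A : Type) [CommRing A] (n : ℕ) (a : Aˣ) : (IterLaurent A n)ˣ :=
  Units.map (iterC A n).toMonoidHom a

/-! ### Logarithm and exponential of iterated Laurent series over ℚ-algebras,
characterized coefficientwise. -/

/-- `L` is the logarithm of `f`: its coefficients are given by the (coefficientwise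
convergent) series `log(f) = Σ_{i≥1} (−1)^{i+1}(f−1)^i/i`. -/
def IsLog (A : Type) [CommRing A] [Algebra ℚ A] {n : ℕ} (f L : IterLaurent A n) : Prop :=
  ∀ l : Fin n → ℤ,
    iterCoeff A L l = ∑ᶠ i : ℕ, ((-1 : ℚ) ^ (i + 1) / i) • iterCoeff A ((f - 1) ^ i) l

/-- `E` is the exponential of `h`: its coefficients are given by the (coefficientwise
convergent) series `exp(h) = Σ_{i≥0} h^i/i!`. -/
def IsExp (A : Type) [CommRing A] [Algebra ℚ A] {n : ℕ} (h E : IterLaurent A n) : Prop :=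
  ∀ l : Fin n → ℤ,
    iterCoeff A E l = ∑ᶠ i : ℕ, ((i.factorial : ℚ)⁻¹) • iterCoeff A (h ^ i) l

/-- The exponential `exp(a) = Σ_{k≥0} a^k/k!` of a (nilpotent) element — a finite sum. -/
def expNil (A : Type) [CommRing A] [Algebra ℚ A] (a : A) : A :=
  ∑ᶠ k : ℕ, ((k.factorial : ℚ)⁻¹) • a ^ k

/-! ### The universal power series `φ_{n,j₁…j_q}` of the Contou-Carrère symbol -/

/-- The index set of the variables `x_{i,l}`, `1 ≤ i ≤ p`, `l ∈ ℤⁿ`. -/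
abbrev VarIdx (p n : ℕ) : Type := Fin p × (Fin n → ℤ)

/-- The ideal `m` generated by the variables. -/
def polyIdeal (p n : ℕ) (M' : Finset (VarIdx p n)) :
    Ideal (MvPolynomial {s // s ∈ M'} ℚ) :=
  Ideal.span (Set.range MvPolynomial.X)

/-- `B_{M′,d} = ℚ[x_{i,l} : (i,l) ∈ M′]/m^d`. -/
def BRing (p n : ℕ) (M' : Finset (VarIdx p n)) (d : ℕ) : Type :=
  MvPolynomial {s // s ∈ M'} ℚ ⧸ (polyIdeal p n M') ^ d

instance (p n : ℕ) (M' : Finset (VarIdx p n)) (d : ℕ) : CommRing (BRing p n M' d) :=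
  inferInstanceAs (CommRing (MvPolynomial {s // s ∈ M'} ℚ ⧸ (polyIdeal p n M') ^ d))

instance (p n : ℕ) (M' : Finset (VarIdx p n)) (d : ℕ) : Algebra ℚ (BRing p n M' d) :=
  inferInstanceAs (Algebra ℚ (MvPolynomial {s // s ∈ M'} ℚ ⧸ (polyIdeal p n M') ^ d))

/-- The class of the variable `x_s` in `B_{M′,d}`. -/
def bX (p n : ℕ) (M' : Finset (VarIdx p n)) (d : ℕ) (s : VarIdx p n) (hs : s ∈ M') :
    BRing p n M' d :=
  Ideal.Quotient.mk _ (MvPolynomial.X ⟨s, hs⟩)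

/-- The universal series `fᵢ = 1 + Σ_{l : (i,l) ∈ M′} x_{i,l} t^l ∈ Lⁿ(B_{M′,d})`. -/
def seriesF (p n : ℕ) (M' : Finset (VarIdx p n)) (d : ℕ) (i : Fin p) :
    IterLaurent (BRing p n M' d) n :=
  1 + ∑ s ∈ M'.attach,
    if s.1.1 = i then
      iterC (BRing p n M' d) n (bX p n M' d s.1 s.2) * tpow (BRing p n M' d) s.1.2
    else 0

/-- `log f = Σ_{k≥1} (−1)^{k+1}(f−1)^k/k`, as a finite sum (finsum), meaningful when
`f - 1` is nilpotent. -/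
def logNil (B : Type) [CommRing B] [Algebra ℚ B] {n : ℕ} (f : IterLaurent B n) :
    IterLaurent B n :=
  ∑ᶠ k : ℕ, iterC B n (algebraMap ℚ B ((-1 : ℚ) ^ (k + 1) / k)) * (f - 1) ^ k

/-- The `n×n` matrix whose first `p−1` rows are `(fᵢ⁻¹·∂fᵢ/∂tⱼ)ⱼ` for `i = 2,…,p`, and
whose last `q` rows (indexed by `s = 1,…,q`) have the entry `t_{j_s}⁻¹` in column `j_s`
and `0` elsewhere. -/
def dMat (p n q : ℕ) (hp : 1 ≤ p) (hpq : p + q = n + 1) (j : Fin q → Fin n)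
    (M' : Finset (VarIdx p n)) (d : ℕ) :
    Matrix (Fin n) (Fin n) (IterLaurent (BRing p n M' d) n) :=
  Matrix.of fun r c =>
    if hr : (r : ℕ) < p - 1 then
      Ring.inverse (seriesF p n M' d ⟨(r : ℕ) + 1, by omega⟩) *
        pderivIter (BRing p n M' d) c (seriesF p n M' d ⟨(r : ℕ) + 1, by omega⟩)
    else
      if c = j ⟨(r : ℕ) - (p - 1), by omega⟩ then
        tpow (BRing p n M' d) (fun t => if t = c then (-1 : ℤ) else 0)
      else 0

/-- The element `φ^{(M′,d)} = exp res (log f₁ · det D) ∈ B_{M′,d}`. -/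
def phiMd (p n q : ℕ) (hp : 1 ≤ p) (hpq : p + q = n + 1) (j : Fin q → Fin n)
    (M' : Finset (VarIdx p n)) (d : ℕ) : BRing p n M' d :=
  expNil (BRing p n M' d)
    (iterRes (BRing p n M' d)
      (logNil (BRing p n M' d) (seriesF p n M' d ⟨0, by omega⟩) *
        Matrix.det (dMat p n q hp hpq j M' d)))

theorem projHom_aux (p n : ℕ) (M' M'' : Finset (VarIdx p n)) (hM : M' ⊆ M'') (d d' : ℕ)
    (hd : d ≤ d') :
    ∀ a ∈ (polyIdeal p n M'') ^ d',
      (MvPolynomial.aeval fun s : {s // s ∈ M''} =>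
        if hs : (s : VarIdx p n) ∈ M' then bX p n M' d (↑s) hs else 0) a
        = (0 : BRing p n M' d) := by
  intro a ha
  set φ := (MvPolynomial.aeval (R := ℚ) fun s : {s // s ∈ M''} =>
      if hs : (s : VarIdx p n) ∈ M' then bX p n M' d (↑s) hs else 0) with hφ
  set mk : MvPolynomial {s // s ∈ M'} ℚ →+* BRing p n M' d :=
    Ideal.Quotient.mk ((polyIdeal p n M') ^ d) with hmk
  have hIK : Ideal.map φ.toRingHom (polyIdeal p n M'') ≤
      Ideal.map mk (polyIdeal p n M') := by
    rw [polyIdeal, Ideal.map_span, Ideal.span_le]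
    rintro y ⟨x, ⟨s, rfl⟩, rfl⟩
    by_cases hs : (s : VarIdx p n) ∈ M'
    · have hx : φ.toRingHom (MvPolynomial.X s) =
          mk (MvPolynomial.X ⟨(s : VarIdx p n), hs⟩) := by
        simp [hφ, hmk, bX, hs]
        rfl
      rw [SetLike.mem_coe, hx]
      exact Ideal.mem_map_of_mem mk (Ideal.subset_span ⟨_, rfl⟩)
    · have hx : φ.toRingHom (MvPolynomial.X s) = 0 := by
        simp [hφ, hs]
      rw [SetLike.mem_coe, hx]
      exact zero_mem _
  have h1 : φ a ∈ Ideal.map φ.toRingHom ((polyIdeal p n M'') ^ d') :=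
    Ideal.mem_map_of_mem _ ha
  rw [Ideal.map_pow] at h1
  have h2 := Ideal.pow_right_mono hIK d' h1
  rw [← Ideal.map_pow] at h2
  have h4 := Ideal.map_mono (f := mk) (Ideal.pow_le_pow_right hd) h2
  have h5 : φ a ∈ Ideal.map (Ideal.Quotient.mk ((polyIdeal p n M') ^ d))
      ((polyIdeal p n M') ^ d) := h4
  rw [Ideal.map_quotient_self] at h5
  exact (Ideal.mem_bot).1 h5

/-- The natural projection `B_{M′′,d′} → B_{M′,d}` for `M′ ⊆ M′′` and `d ≤ d′`,
sending `x_s ↦ x_s` for `s ∈ M′` and `x_s ↦ 0` otherwise. -/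
def projHom (p n : ℕ) (M' M'' : Finset (VarIdx p n)) (hM : M' ⊆ M'') (d d' : ℕ)
    (hd : d ≤ d') : BRing p n M'' d' →+* BRing p n M' d :=
  Ideal.Quotient.lift ((polyIdeal p n M'') ^ d')
    ((MvPolynomial.aeval fun s : {s // s ∈ M''} =>
      if hs : (s : VarIdx p n) ∈ M' then bX p n M' d (↑s) hs else 0).toRingHom)
    (projHom_aux p n M' M'' hM d d' hd)

/-- The finite set of exponent functions supported in `M′` with total degree `< d`. -/
def expSet (p n : ℕ) (M' : Finset (VarIdx p n)) (d : ℕ) : Finset (VarIdx p n →₀ ℕ) :=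
  (Finset.image
    (fun g : {s // s ∈ M'} → Fin d =>
      ∑ s ∈ M'.attach, Finsupp.single (s : VarIdx p n) (g s : ℕ))
    Finset.univ).filter
    (fun m => (m.sum fun _ k => k) < d)

/-- The truncation of a power series `Φ` to a polynomial in the variables of `M′` of
total degree `< d`; its image in `B_{M′,d}` is the projection of `Φ`. -/
def truncPoly (p n : ℕ) (M' : Finset (VarIdx p n)) (d : ℕ)
    (Φ : MvPowerSeries (VarIdx p n) ℚ) : MvPolynomial {s // s ∈ M'} ℚ :=
  ∑ m ∈ expSet p n M' d,
    MvPolynomial.monomial (m.subtypeDomain (· ∈ M')) (MvPowerSeries.coeff m Φ)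

/-- `Φ` restricts compatibly to all the `φ^{(M′,d)}`: in each `B_{M′,d}` (with `d ≥ 1`)
the class of the truncation of `Φ` equals `φ^{(M′,d)}`. -/
def IsUniversalCC (p n q : ℕ) (hp : 1 ≤ p) (hpq : p + q = n + 1) (j : Fin q → Fin n)
    (Φ : MvPowerSeries (VarIdx p n) ℚ) : Prop :=
  ∀ (M' : Finset (VarIdx p n)) (d : ℕ), 1 ≤ d →
    Ideal.Quotient.mk ((polyIdeal p n M') ^ d) (truncPoly p n M' d Φ) =
      phiMd p n q hp hpq j M' d

/-! ### Helper lemmas: coefficients of iterated Laurent series -/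

section IterCoeffBasics

variable {B : Type} [CommRing B]

theorem iterCoeff_succ {n : ℕ} (f : IterLaurent B (n+1)) (l : Fin (n+1) → ℤ) :
    iterCoeff B f l = iterCoeff B (f.down.coeff (l (Fin.last n))) (fun i => l i.castSucc) := rfl

theorem iterCoeff_snoc {n : ℕ} (f : IterLaurent B (n+1)) (l' : Fin n → ℤ) (a : ℤ) :
    iterCoeff B f (Fin.snoc l' a) = iterCoeff B (f.down.coeff a) l' := by
  rw [iterCoeff_succ]
  simp only [Fin.snoc_last, Fin.snoc_castSucc]

theorem iterCoeff_zero' : ∀ {n : ℕ} (l : Fin n → ℤ), iterCoeff B (0 : IterLaurent B n) l = 0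
  | 0, _ => rfl
  | n+1, l => iterCoeff_zero' (fun i => l i.castSucc)

theorem iterCoeff_add' : ∀ {n : ℕ} (f g : IterLaurent B n) (l : Fin n → ℤ),
    iterCoeff B (f + g) l = iterCoeff B f l + iterCoeff B g l
  | 0, _, _, _ => rfl
  | n+1, f, g, l => iterCoeff_add' (f.down.coeff (l (Fin.last n))) (g.down.coeff (l (Fin.last n)))
      (fun i => l i.castSucc)

/-- `iterCoeff` bundled as an additive monoid homomorphism. -/
def iterCoeffHom (n : ℕ) (l : Fin n → ℤ) : IterLaurent B n →+ B where
  toFun f := iterCoeff B f l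
  map_zero' := iterCoeff_zero' l
  map_add' f g := iterCoeff_add' f g l

theorem iterLaurent_eq_zero_of_iterCoeff :
    ∀ {n : ℕ} (f : IterLaurent B n), (∀ l, iterCoeff B f l = 0) → f = 0
  | 0, f, h => h (fun i => i.elim0)
  | n+1, f, h => by
    show f.down = 0
    ext a
    have : f.down.coeff a = 0 := by
      apply iterLaurent_eq_zero_of_iterCoeff
      intro l'
      rw [← iterCoeff_snoc f l' a]
      exact h _
    simpa using this


theorem tail_eq_iff {n : ℕ} {l l' : Fin (n+1) → ℤ} (h : l (Fin.last n) = l' (Fin.last n)) :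
    ((fun i : Fin n => l i.castSucc) = (fun i : Fin n => l' i.castSucc)) ↔ l = l' := by
  constructor
  · intro hf
    funext i
    exact Fin.lastCases h (fun i => congrFun hf i) i
  · intro hf
    rw [hf]

theorem iterCoeff_one : ∀ {n : ℕ} (l : Fin n → ℤ),
    iterCoeff B (1 : IterLaurent B n) l = if l = 0 then 1 else 0
  | 0, l => by
    have : l = 0 := Subsingleton.elim _ _
    simp [this, iterCoeff]; rfl
  | n+1, l => by
    rw [iterCoeff_succ]
    show iterCoeff B ((1 : LaurentSeries (IterLaurent B n)).coeff (l (Fin.last n))) _ = _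
    rw [HahnSeries.coeff_one]
    by_cases ha : l (Fin.last n) = 0
    · rw [if_pos ha, iterCoeff_one]
      exact if_congr (tail_eq_iff (l' := 0) ha) rfl rfl
    · rw [if_neg ha, iterCoeff_zero', if_neg]
      intro h
      exact ha (congrFun h (Fin.last n))

theorem iterCoeff_tpow : ∀ {n : ℕ} (l₀ l : Fin n → ℤ),
    iterCoeff B (tpow B l₀) l = if l = l₀ then 1 else 0
  | 0, l₀, l => by
    have : l = l₀ := Subsingleton.elim _ _
    simp [this, tpow, iterCoeff]; rfl
  | n+1, l₀, l => by
    rw [iterCoeff_succ]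
    show iterCoeff B ((HahnSeries.single (l₀ (Fin.last n))
      (tpow B (fun i => l₀ i.castSucc))).coeff (l (Fin.last n))) _ = _
    rw [HahnSeries.coeff_single]
    by_cases ha : l (Fin.last n) = l₀ (Fin.last n)
    · rw [if_pos ha, iterCoeff_tpow]
      exact if_congr (tail_eq_iff ha) rfl rfl
    · rw [if_neg ha, iterCoeff_zero', if_neg]
      intro h
      exact ha (congrFun h (Fin.last n))

theorem iterCoeff_iterC : ∀ {n : ℕ} (a : B) (l : Fin n → ℤ),
    iterCoeff B (iterC B n a) l = if l = 0 then a else 0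
  | 0, a, l => by
    have : l = 0 := Subsingleton.elim _ _
    rw [if_pos this]
    rfl
  | n+1, a, l => by
    rw [iterCoeff_succ]
    show iterCoeff B ((HahnSeries.C (iterC B n a) :
      LaurentSeries (IterLaurent B n)).coeff (l (Fin.last n))) _ = _
    rw [HahnSeries.C_apply, HahnSeries.coeff_single]
    by_cases ha : l (Fin.last n) = 0
    · rw [if_pos ha, iterCoeff_iterC]
      exact if_congr (tail_eq_iff (l' := 0) ha) rfl rfl
    · rw [if_neg ha, iterCoeff_zero', if_neg]
      intro h
      exact ha (congrFun h (Fin.last n))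

end IterCoeffBasics

/-! ### A coefficientwise weight invariant on iterated Laurent series -/

section PWMachinery

variable {B : Type} [CommRing B]

/-- `PW W w s f` says every coefficient `coeff_l f` of `f` lies in `W (⟪w,l⟫ + s)`. -/
def PW (W : ℤ → Submodule ℤ B) {n : ℕ} (w : Fin n → ℤ) (s : ℤ) (f : IterLaurent B n) : Prop :=
  ∀ l : Fin n → ℤ, iterCoeff B f l ∈ W (∑ i, w i * l i + s)

variable (W : ℤ → Submodule ℤ B)

theorem PW_of_eq {n : ℕ} {w : Fin n → ℤ} {s s' : ℤ} {f g : IterLaurent B n}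
    (h : PW W w s f) (hs : s = s') (hf : f = g) : PW W w s' g := hs ▸ hf ▸ h

theorem PW_zero {n : ℕ} (w : Fin n → ℤ) (s : ℤ) : PW W w s (0 : IterLaurent B n) := by
  intro l
  rw [iterCoeff_zero']
  exact zero_mem _

theorem PW_add {n : ℕ} {w : Fin n → ℤ} {s : ℤ} {f g : IterLaurent B n}
    (hf : PW W w s f) (hg : PW W w s g) : PW W w s (f + g) := by
  intro l
  rw [iterCoeff_add']
  exact add_mem (hf l) (hg l)

theorem PW_neg {n : ℕ} {w : Fin n → ℤ} {s : ℤ} {f : IterLaurent B n}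
    (hf : PW W w s f) : PW W w s (-f) := by
  intro l
  have : iterCoeff B (-f) l = -(iterCoeff B f l) := map_neg (iterCoeffHom n l) f
  rw [this]
  exact neg_mem (hf l)

theorem PW_sum {n : ℕ} {w : Fin n → ℤ} {s : ℤ} {ι : Type*} (t : Finset ι)
    (f : ι → IterLaurent B n) (hf : ∀ i ∈ t, PW W w s (f i)) :
    PW W w s (∑ i ∈ t, f i) := by
  classical
  induction t using Finset.induction_on with
  | empty => simpa using PW_zero W w s
  | insert _ _ hx ih =>
    rw [Finset.sum_insert hx]
    exact PW_add W (hf _ (Finset.mem_insert_self _ _))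
      (ih fun i hi => hf i (Finset.mem_insert_of_mem hi))

theorem PW_zsmul {n : ℕ} {w : Fin n → ℤ} {s : ℤ} {f : IterLaurent B n} (m : ℤ)
    (hf : PW W w s f) : PW W w s (m • f) := by
  intro l
  have : iterCoeff B (m • f) l = m • (iterCoeff B f l) := map_zsmul (iterCoeffHom n l) m f
  rw [this]
  exact Submodule.smul_mem _ m (hf l)

/-- Coefficients of a Hahn-series coefficient of `f` inherit the invariant. -/
theorem PW_down_coeff {n : ℕ} {w : Fin (n+1) → ℤ} {s : ℤ} {f : IterLaurent B (n+1)}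
    (hf : PW W w s f) (a : ℤ) :
    PW W (fun i : Fin n => w i.castSucc) (w (Fin.last n) * a + s) (f.down.coeff a) := by
  intro l'
  have := hf (Fin.snoc l' a)
  rw [iterCoeff_snoc] at this
  convert this using 2
  rw [Fin.sum_univ_castSucc]
  simp only [Fin.snoc_castSucc, Fin.snoc_last]
  ring

theorem PW_mul (hWmul : ∀ {a b : ℤ} {x y : B}, x ∈ W a → y ∈ W b → x * y ∈ W (a + b)) : ∀ {n : ℕ} {w : Fin n → ℤ} {s s' : ℤ} {f g : IterLaurent B n},
    PW W w s f → PW W w s' g → PW W w (s + s') (f * g)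
  | 0, w, s, s', f, g, hf, hg => by
    intro l
    have h1 := hf l
    have h2 := hg l
    simp only [Finset.univ_eq_empty, Finset.sum_empty, zero_add] at h1 h2 ⊢
    exact hWmul h1 h2
  | n+1, w, s, s', f, g, hf, hg => by
    intro l
    rw [iterCoeff_succ]
    have hmc : (f * g).down.coeff (l (Fin.last n)) =
        ∑ ij ∈ Finset.addAntidiagonal f.down.isPWO_support g.down.isPWO_support (l (Fin.last n)),
          f.down.coeff ij.1 * g.down.coeff ij.2 := HahnSeries.coeff_mul
    rw [hmc]
    have hms : iterCoeff B (∑ ij ∈ Finset.addAntidiagonal f.down.isPWO_support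
          g.down.isPWO_support (l (Fin.last n)), f.down.coeff ij.1 * g.down.coeff ij.2)
          (fun i => l i.castSucc) =
        ∑ ij ∈ Finset.addAntidiagonal f.down.isPWO_support g.down.isPWO_support (l (Fin.last n)),
          iterCoeff B (f.down.coeff ij.1 * g.down.coeff ij.2) (fun i => l i.castSucc) :=
      map_sum (iterCoeffHom n (fun i => l i.castSucc)) _ _
    rw [hms]
    apply sum_mem
    intro ij hij
    replace hij := Finset.mem_addAntidiagonal.mp hij
    have h1 := PW_down_coeff W hf ij.1
    have h2 := PW_down_coeff W hg ij.2
    have h3 := PW_mul hWmul h1 h2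
    have h4 := h3 (fun i => l i.castSucc)
    show iterCoeff B (f.down.coeff ij.1 * g.down.coeff ij.2) (fun i => l i.castSucc) ∈ _
    convert h4 using 2
    rw [Fin.sum_univ_castSucc, ← hij.2.2]
    ring

theorem PW_one (hW1 : (1 : B) ∈ W 0) {n : ℕ} (w : Fin n → ℤ) : PW W w 0 (1 : IterLaurent B n) := by
  intro l
  rw [iterCoeff_one]
  by_cases h : l = 0
  · rw [if_pos h]
    convert hW1 using 2
    simp [h]
  · rw [if_neg h]
    exact zero_mem _

theorem PW_pow (hWmul : ∀ {a b : ℤ} {x y : B}, x ∈ W a → y ∈ W b → x * y ∈ W (a + b)) (hW1 : (1 : B) ∈ W 0) {n : ℕ} {w : Fin n → ℤ} {s : ℤ} {f : IterLaurent B n} (hf : PW W w s f) :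
    ∀ k : ℕ, PW W w (k * s) (f ^ k)
  | 0 => by
    apply PW_of_eq W (PW_one W hW1 w) (by push_cast; ring) (pow_zero f).symm
  | k+1 => by
    have := PW_mul W hWmul (PW_pow hWmul hW1 hf k) hf
    apply PW_of_eq W this (by push_cast; ring) (pow_succ f k).symm

theorem PW_prod (hWmul : ∀ {a b : ℤ} {x y : B}, x ∈ W a → y ∈ W b → x * y ∈ W (a + b)) (hW1 : (1 : B) ∈ W 0) {n : ℕ} {w : Fin n → ℤ} {ι : Type*} (t : Finset ι) (s : ι → ℤ)
    (f : ι → IterLaurent B n) (hf : ∀ i ∈ t, PW W w (s i) (f i)) :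
    PW W w (∑ i ∈ t, s i) (∏ i ∈ t, f i) := by
  classical
  induction t using Finset.induction_on with
  | empty => simpa using PW_one W hW1 w
  | insert _ _ hx ih =>
    rw [Finset.sum_insert hx, Finset.prod_insert hx]
    exact PW_mul W hWmul (hf _ (Finset.mem_insert_self _ _))
      (ih fun i hi => hf i (Finset.mem_insert_of_mem hi))

theorem PW_tpow (hW1 : (1 : B) ∈ W 0) {n : ℕ} (w : Fin n → ℤ) (l₀ : Fin n → ℤ) :
    PW W w (-(∑ i, w i * l₀ i)) (tpow B l₀) := by
  intro l
  rw [iterCoeff_tpow]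
  by_cases h : l = l₀
  · rw [if_pos h]
    convert hW1 using 2
    rw [h]
    ring
  · rw [if_neg h]
    exact zero_mem _

theorem PW_iterC {n : ℕ} (w : Fin n → ℤ) {s : ℤ} {a : B} (ha : a ∈ W s) :
    PW W w s (iterC B n a) := by
  intro l
  rw [iterCoeff_iterC]
  by_cases h : l = 0
  · rw [if_pos h]
    convert ha using 2
    simp [h]
  · rw [if_neg h]
    exact zero_mem _

end PWMachinery

section PderivPW

variable {B : Type} [CommRing B]

theorem pderiv_down_coeff {n : ℕ} (j : Fin (n+1)) (f : IterLaurent B (n+1)) (a : ℤ) :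
    (pderivIter B j f).down.coeff a =
      if h : (j : ℕ) < n then pderivIter B (⟨(j : ℕ), h⟩ : Fin n) (f.down.coeff a)
      else (a + 1) • f.down.coeff (a + 1) := by
  by_cases h : (j : ℕ) < n
  · rw [dif_pos h]
    show ((pderivHom B j : IterLaurent B (n+1) →+ IterLaurent B (n+1)) f).down.coeff a = _
    unfold pderivHom
    rw [dif_pos h]
    rfl
  · rw [dif_neg h]
    show ((pderivHom B j : IterLaurent B (n+1) →+ IterLaurent B (n+1)) f).down.coeff a = _
    unfold pderivHom
    rw [dif_neg h]
    rfl

theorem PW_pderiv (W : ℤ → Submodule ℤ B) :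
    ∀ {n : ℕ} (w : Fin n → ℤ) (j : Fin n) (s : ℤ) (f : IterLaurent B n),
      PW W w s f → PW W w (s + w j) (pderivIter B j f)
  | 0, _, j, _, _, _ => j.elim0
  | n+1, w, j, s, f, hf => by
    intro l
    rw [iterCoeff_succ, pderiv_down_coeff]
    by_cases h : (j : ℕ) < n
    · rw [dif_pos h]
      have h1 := PW_down_coeff W hf (l (Fin.last n))
      have h2 := PW_pderiv W _ (⟨(j : ℕ), h⟩ : Fin n) _ _ h1
      have h3 := h2 (fun i => l i.castSucc)
      convert h3 using 2
      rw [Fin.sum_univ_castSucc,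
        show Fin.castSucc (⟨(j : ℕ), h⟩ : Fin n) = j from Fin.ext rfl]
      ring
    · rw [dif_neg h]
      have hj : j = Fin.last n := Fin.ext (by simp only [Fin.val_last]; have := j.isLt; omega)
      have h1 := PW_down_coeff W hf (l (Fin.last n) + 1)
      have h3 := h1 (fun i => l i.castSucc)
      have hz : iterCoeff B ((l (Fin.last n) + 1) • f.down.coeff (l (Fin.last n) + 1))
          (fun i => l i.castSucc) = (l (Fin.last n) + 1) •
            iterCoeff B (f.down.coeff (l (Fin.last n) + 1)) (fun i => l i.castSucc) :=
        map_zsmul (iterCoeffHom n (fun i => l i.castSucc)) _ _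
      rw [hz]
      have h4 := Submodule.smul_mem _ (l (Fin.last n) + 1) h3
      convert h4 using 2
      rw [Fin.sum_univ_castSucc, hj]
      ring

end PderivPW

section FinsumMem

theorem finsum_mem_addSubmonoid {ι M : Type*} [AddCommMonoid M] (S : AddSubmonoid M)
    (g : ι → M) (h : ∀ i, g i ∈ S) : (∑ᶠ i, g i) ∈ S := by
  by_cases hf : (Function.support g).Finite
  · rw [finsum_eq_sum g hf]
    exact sum_mem fun i _ => h i
  · rw [finsum_of_infinite_support hf]
    exact zero_mem S

end FinsumMem

section Nilpotency

variable (p n : ℕ) (M' : Finset (VarIdx p n)) (d : ℕ)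

/-- The image of the ideal of variables in `B_{M',d}`. -/
def mIdeal : Ideal (BRing p n M' d) :=
  (polyIdeal p n M').map (Ideal.Quotient.mk ((polyIdeal p n M') ^ d))

/-- The filtration by powers of the variable ideal, as `ℤ`-submodules. -/
def WI : ℤ → Submodule ℤ (BRing p n M' d) := fun a =>
  Submodule.restrictScalars ℤ ((mIdeal p n M' d) ^ a.toNat : Ideal (BRing p n M' d))

theorem WI_mul {a b : ℤ} {x y : BRing p n M' d}
    (hx : x ∈ WI p n M' d a) (hy : y ∈ WI p n M' d b) : x * y ∈ WI p n M' d (a + b) := by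
  rw [WI, Submodule.restrictScalars_mem] at hx hy ⊢
  have h1 : x * y ∈ (mIdeal p n M' d) ^ a.toNat * (mIdeal p n M' d) ^ b.toNat :=
    Ideal.mul_mem_mul hx hy
  rw [← pow_add] at h1
  exact Ideal.pow_le_pow_right (by omega) h1

theorem WI_one : (1 : BRing p n M' d) ∈ WI p n M' d 0 := by
  rw [WI, Submodule.restrictScalars_mem]
  show (1 : BRing p n M' d) ∈ (mIdeal p n M' d) ^ (0 : ℤ).toNat
  norm_num

theorem seriesF_sub_one (i : Fin p) :
    seriesF p n M' d i - 1 = ∑ s ∈ M'.attach,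
      if s.1.1 = i then
        iterC (BRing p n M' d) n (bX p n M' d s.1 s.2) * tpow (BRing p n M' d) s.1.2
      else 0 := by
  rw [seriesF, add_sub_cancel_left]

theorem bX_mem_WI (s : VarIdx p n) (hs : s ∈ M') : bX p n M' d s hs ∈ WI p n M' d 1 := by
  rw [WI, Submodule.restrictScalars_mem]
  show bX p n M' d s hs ∈ (mIdeal p n M' d) ^ (1 : ℤ).toNat
  rw [show ((1 : ℤ)).toNat = 1 from rfl, pow_one, mIdeal]
  exact Ideal.mem_map_of_mem _ (Ideal.subset_span ⟨⟨s, hs⟩, rfl⟩)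

theorem PWI_seriesF_sub_one (i : Fin p) :
    PW (WI p n M' d) (0 : Fin n → ℤ) 1 (seriesF p n M' d i - 1) := by
  rw [seriesF_sub_one]
  apply PW_sum
  intro s _
  by_cases h : s.1.1 = i
  · rw [if_pos h]
    have h1 := PW_iterC (WI p n M' d) (0 : Fin n → ℤ) (bX_mem_WI p n M' d s.1 s.2)
    have h2 := PW_tpow (WI p n M' d) (WI_one p n M' d) (0 : Fin n → ℤ) s.1.2
    exact PW_of_eq _ (PW_mul _ (fun hx hy => WI_mul p n M' d hx hy) h1 h2) (by simp) rfl
  · rw [if_neg h]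
    exact PW_zero _ _ _

theorem seriesF_sub_one_pow_d (i : Fin p) : (seriesF p n M' d i - 1) ^ d = 0 := by
  have h1 := PW_pow (WI p n M' d) (fun hx hy => WI_mul p n M' d hx hy) (WI_one p n M' d)
    (PWI_seriesF_sub_one p n M' d i) d
  apply iterLaurent_eq_zero_of_iterCoeff
  intro l
  have h2 := h1 l
  have h3 : (∑ i : Fin n, (0 : Fin n → ℤ) i * l i + (d : ℤ) * 1) = (d : ℤ) := by simp
  rw [h3] at h2
  rw [WI, Submodule.restrictScalars_mem] at h2
  have h4 : (mIdeal p n M' d) ^ ((d : ℤ)).toNat = ⊥ := by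
    rw [Int.toNat_natCast, mIdeal]
    exact (Ideal.map_pow _ _ _).symm.trans (Ideal.map_quotient_self _)
  rw [h4] at h2
  simpa using h2

theorem ringInverse_seriesF (i : Fin p) :
    Ring.inverse (seriesF p n M' d i) =
      ∑ k ∈ Finset.range d, (1 - seriesF p n M' d i) ^ k := by
  set f := seriesF p n M' d i with hf
  set S := ∑ k ∈ Finset.range d, (1 - f) ^ k with hS
  have hx : (1 - f) ^ d = 0 := by
    have : (1 - f) ^ d = (-1) ^ d * (f - 1) ^ d := by
      rw [← mul_pow]
      ring_nf
    rw [this, seriesF_sub_one_pow_d, mul_zero]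
  have hmul : f * S = 1 := by
    have hg := geom_sum_mul (1 - f) d
    have h2 : f * S = -(S * ((1 - f) - 1)) := by ring
    rw [h2, hg, hx]
    ring
  have hmul' : S * f = 1 := by rw [mul_comm]; exact hmul
  let u : (IterLaurent (BRing p n M' d) n)ˣ := ⟨f, S, hmul, hmul'⟩
  exact Ring.inverse_unit u

end Nilpotency

section Weight

variable (p n : ℕ) (M' : Finset (VarIdx p n)) (d : ℕ)

/-- The `k`-th weight of an exponent vector. -/
def wtk (k : Fin n) (μ : {s // s ∈ M'} →₀ ℕ) : ℤ :=
  μ.sum fun s e => (e : ℤ) * (s : VarIdx p n).2 k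

theorem wtk_add (k : Fin n) (μ ν : {s // s ∈ M'} →₀ ℕ) :
    wtk p n M' k (μ + ν) = wtk p n M' k μ + wtk p n M' k ν :=
  Finsupp.sum_add_index' (fun s => by simp) (fun s e1 e2 => by push_cast; ring)

/-- The span of classes of monomials of `k`-weight `a`. -/
def WK (k : Fin n) : ℤ → Submodule ℤ (BRing p n M' d) := fun a =>
  Submodule.restrictScalars ℤ (Submodule.span ℚ
    {x : BRing p n M' d | ∃ μ : {s // s ∈ M'} →₀ ℕ, wtk p n M' k μ = a ∧
      x = Ideal.Quotient.mk ((polyIdeal p n M') ^ d) (MvPolynomial.monomial μ (1 : ℚ))})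

theorem WK_one (k : Fin n) : (1 : BRing p n M' d) ∈ WK p n M' d k 0 := by
  rw [WK, Submodule.restrictScalars_mem]
  refine Submodule.subset_span ⟨0, ?_, ?_⟩
  · rw [wtk, Finsupp.sum_zero_index]
  · rw [MvPolynomial.monomial_zero', MvPolynomial.C_1, map_one]
    rfl

theorem WK_mul (k : Fin n) {a b : ℤ} {x y : BRing p n M' d}
    (hx : x ∈ WK p n M' d k a) (hy : y ∈ WK p n M' d k b) :
    x * y ∈ WK p n M' d k (a + b) := by
  simp only [WK, Submodule.restrictScalars_mem] at hx hy ⊢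
  induction hx using Submodule.span_induction with
  | mem x hxg =>
    induction hy using Submodule.span_induction with
    | mem y hyg =>
      obtain ⟨μ, hμ, rfl⟩ := hxg
      obtain ⟨ν, hν, rfl⟩ := hyg
      refine Submodule.subset_span ⟨μ + ν, ?_, ?_⟩
      · rw [wtk_add, hμ, hν]
      · have hmm : (MvPolynomial.monomial μ (1 : ℚ)) * (MvPolynomial.monomial ν (1 : ℚ)) =
            MvPolynomial.monomial (μ + ν) (1 : ℚ) := by
          rw [MvPolynomial.monomial_mul, one_mul]
        rw [← hmm, map_mul]
        rfl
    | zero => rw [mul_zero]; exact zero_mem _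
    | add y z _ _ ihy ihz => rw [mul_add]; exact add_mem ihy ihz
    | smul q y _ ih => rw [mul_smul_comm]; exact Submodule.smul_mem _ q ih
  | zero => rw [zero_mul]; exact zero_mem _
  | add x z _ _ ihx ihz => rw [add_mul]; exact add_mem ihx ihz
  | smul q x _ ih => rw [smul_mul_assoc]; exact Submodule.smul_mem _ q ih

theorem WK_qsmul (k : Fin n) {a : ℤ} {x : BRing p n M' d} (r : ℚ)
    (hx : x ∈ WK p n M' d k a) : r • x ∈ WK p n M' d k a := by
  simp only [WK, Submodule.restrictScalars_mem] at hx ⊢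
  exact Submodule.smul_mem _ r hx

theorem sum_wv_mul (k : Fin n) (g : Fin n → ℤ) :
    ∑ i, (if i = k then (1 : ℤ) else 0) * g i = g k := by
  rw [Finset.sum_eq_single k]
  · simp
  · intro b _ hb
    rw [if_neg hb, zero_mul]
  · intro h
    exact absurd (Finset.mem_univ k) h

theorem bX_mem_WK (k : Fin n) (s : VarIdx p n) (hs : s ∈ M') :
    bX p n M' d s hs ∈ WK p n M' d k (s.2 k) := by
  rw [WK, Submodule.restrictScalars_mem]
  refine Submodule.subset_span ⟨Finsupp.single ⟨s, hs⟩ 1, ?_, ?_⟩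
  · rw [wtk, Finsupp.sum_single_index (by simp)]
    simp
  · rfl

theorem PWK_seriesF (k : Fin n) (i : Fin p) :
    PW (WK p n M' d k) (fun i : Fin n => if i = k then (1 : ℤ) else 0) 0
      (seriesF p n M' d i) := by
  rw [seriesF]
  refine PW_add _ ?_ ?_
  · exact PW_one _ (WK_one p n M' d k) _
  · apply PW_sum
    intro s _
    by_cases h : s.1.1 = i
    · rw [if_pos h]
      have h1 := PW_iterC (WK p n M' d k) (fun i : Fin n => if i = k then (1 : ℤ) else 0)
        (bX_mem_WK p n M' d k s.1 s.2)
      have h2 := PW_tpow (WK p n M' d k) (WK_one p n M' d k)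
        (fun i : Fin n => if i = k then (1 : ℤ) else 0) s.1.2
      refine PW_of_eq _ (PW_mul _ (fun hx hy => WK_mul p n M' d k hx hy) h1 h2) ?_ rfl
      rw [sum_wv_mul]
      ring
    · rw [if_neg h]
      exact PW_zero _ _ _

theorem PWK_seriesF_sub_one (k : Fin n) (i : Fin p) :
    PW (WK p n M' d k) (fun i : Fin n => if i = k then (1 : ℤ) else 0) 0
      (seriesF p n M' d i - 1) := by
  rw [sub_eq_add_neg]
  exact PW_add _ (PWK_seriesF p n M' d k i) (PW_neg _ (PW_one _ (WK_one p n M' d k) _))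

theorem PWK_inverse (k : Fin n) (i : Fin p) :
    PW (WK p n M' d k) (fun i : Fin n => if i = k then (1 : ℤ) else 0) 0
      (Ring.inverse (seriesF p n M' d i)) := by
  rw [ringInverse_seriesF]
  apply PW_sum
  intro m _
  have h1 : (1 : IterLaurent (BRing p n M' d) n) - seriesF p n M' d i =
      -(seriesF p n M' d i - 1) := by ring
  rw [h1]
  have h2 := PW_pow (WK p n M' d k) (fun hx hy => WK_mul p n M' d k hx hy)
    (WK_one p n M' d k) (PW_neg _ (PWK_seriesF_sub_one p n M' d k i)) m
  exact PW_of_eq _ h2 (by ring) rfl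

theorem algebraMap_mem_WK (k : Fin n) (r : ℚ) :
    algebraMap ℚ (BRing p n M' d) r ∈ WK p n M' d k 0 := by
  rw [Algebra.algebraMap_eq_smul_one]
  exact WK_qsmul p n M' d k r (WK_one p n M' d k)

theorem PWK_logNil (hd : 1 ≤ d) (k : Fin n) (i : Fin p) :
    PW (WK p n M' d k) (fun i : Fin n => if i = k then (1 : ℤ) else 0) 0
      (logNil (BRing p n M' d) (seriesF p n M' d i)) := by
  rw [logNil]
  have hsupp : Function.support (fun m : ℕ =>
      iterC (BRing p n M' d) n (algebraMap ℚ (BRing p n M' d) ((-1 : ℚ) ^ (m + 1) / m)) *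
        (seriesF p n M' d i - 1) ^ m) ⊆ ↑(Finset.range d) := by
    intro m hm
    simp only [Function.mem_support] at hm
    by_contra hmem
    apply hm
    have hdm : d ≤ m := by
      simpa [Finset.mem_range] using hmem
    have : (seriesF p n M' d i - 1) ^ m = 0 := by
      have h3 : (seriesF p n M' d i - 1) ^ m =
          (seriesF p n M' d i - 1) ^ d * (seriesF p n M' d i - 1) ^ (m - d) := by
        rw [← pow_add]
        congr 1
        omega
      rw [h3, seriesF_sub_one_pow_d, zero_mul]
    rw [this, mul_zero]
  rw [finsum_eq_sum_of_support_subset _ hsupp]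
  apply PW_sum
  intro m _
  have h1 := PW_iterC (WK p n M' d k) (fun i : Fin n => if i = k then (1 : ℤ) else 0)
    (algebraMap_mem_WK p n M' d k ((-1 : ℚ) ^ (m + 1) / m))
  have h2 := PW_pow (WK p n M' d k) (fun hx hy => WK_mul p n M' d k hx hy)
    (WK_one p n M' d k) (PWK_seriesF_sub_one p n M' d k i) m
  exact PW_of_eq _ (PW_mul _ (fun hx hy => WK_mul p n M' d k hx hy) h1 h2) (by ring) rfl

end Weight

section WeightDet

variable (p n q : ℕ) (hp : 1 ≤ p) (hpq : p + q = n + 1) (jf : Fin q → Fin n)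
variable (M' : Finset (VarIdx p n)) (d : ℕ)

theorem PWK_entry (k : Fin n) (r c : Fin n) :
    PW (WK p n M' d k) (fun i : Fin n => if i = k then (1 : ℤ) else 0)
      (if c = k then (1 : ℤ) else 0) (dMat p n q hp hpq jf M' d r c) := by
  rw [dMat]
  simp only [Matrix.of_apply]
  by_cases hr : (r : ℕ) < p - 1
  · rw [dif_pos hr]
    have h1 := PWK_inverse p n M' d k ⟨(r : ℕ) + 1, by omega⟩
    have h2 := PW_pderiv (WK p n M' d k) _ c _ _ (PWK_seriesF p n M' d k ⟨(r : ℕ) + 1, by omega⟩)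
    exact PW_of_eq _ (PW_mul _ (fun hx hy => WK_mul p n M' d k hx hy) h1 h2) (by ring) rfl
  · rw [dif_neg hr]
    by_cases hc : c = jf ⟨(r : ℕ) - (p - 1), by omega⟩
    · rw [if_pos hc]
      have h1 := PW_tpow (WK p n M' d k) (WK_one p n M' d k)
        (fun i : Fin n => if i = k then (1 : ℤ) else 0) (fun t => if t = c then (-1 : ℤ) else 0)
      refine PW_of_eq _ h1 ?_ rfl
      rw [sum_wv_mul]
      by_cases hkc : k = c
      · rw [if_pos hkc, if_pos hkc.symm]
        ring
      · rw [if_neg hkc, if_neg (fun h => hkc h.symm)]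
        ring
    · rw [if_neg hc]
      exact PW_zero _ _ _

theorem PWK_det (k : Fin n) :
    PW (WK p n M' d k) (fun i : Fin n => if i = k then (1 : ℤ) else 0) 1
      (Matrix.det (dMat p n q hp hpq jf M' d)) := by
  rw [Matrix.det_apply']
  apply PW_sum
  intro σ _
  have hz : (((Equiv.Perm.sign σ : ℤ) : IterLaurent (BRing p n M' d) n)) *
      (∏ c, dMat p n q hp hpq jf M' d (σ c) c) =
      ((Equiv.Perm.sign σ : ℤ)) • (∏ c, dMat p n q hp hpq jf M' d (σ c) c) :=
    (zsmul_eq_mul _ _).symm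
  rw [hz]
  apply PW_zsmul
  have h1 := PW_prod (WK p n M' d k) (fun hx hy => WK_mul p n M' d k hx hy)
    (WK_one p n M' d k) Finset.univ (fun c : Fin n => if c = k then (1 : ℤ) else 0)
    (fun c => dMat p n q hp hpq jf M' d (σ c) c)
    (fun c _ => PWK_entry p n q hp hpq jf M' d k (σ c) c)
  refine PW_of_eq _ h1 ?_ rfl
  have := sum_wv_mul (n := n) k (fun _ => (1 : ℤ))
  simp only [mul_one] at this
  exact this

set_option maxHeartbeats 1000000 in
theorem phiMd_mem_WK (hd : 1 ≤ d) (k : Fin n) :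
    phiMd p n q hp hpq jf M' d ∈ WK p n M' d k 0 := by
  rw [phiMd]
  have hlog := PWK_logNil p n M' d hd k ⟨0, by omega⟩
  have hdet := PWK_det p n q hp hpq jf M' d k
  have hprod := PW_mul (WK p n M' d k) (fun hx hy => WK_mul p n M' d k hx hy) hlog hdet
  have hres : iterRes (BRing p n M' d)
      (logNil (BRing p n M' d) (seriesF p n M' d ⟨0, by omega⟩) *
        Matrix.det (dMat p n q hp hpq jf M' d)) ∈ WK p n M' d k 0 := by
    have h2 := hprod (fun _ => (-1 : ℤ))
    have h3 : (∑ i : Fin n, (if i = k then (1 : ℤ) else 0) * (-1 : ℤ)) + (0 + 1) = 0 := by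
      rw [sum_wv_mul]
      ring
    rw [h3] at h2
    exact h2
  rw [expNil]
  have hmem := finsum_mem_addSubmonoid (WK p n M' d k 0).toAddSubmonoid
    (fun m : ℕ => ((m.factorial : ℚ)⁻¹) • (iterRes (BRing p n M' d)
      (logNil (BRing p n M' d) (seriesF p n M' d ⟨0, by omega⟩) *
        Matrix.det (dMat p n q hp hpq jf M' d))) ^ m) ?_
  · exact hmem
  · intro m
    rw [Submodule.mem_toAddSubmonoid]
    apply WK_qsmul
    induction m with
    | zero => rw [pow_zero]; exact WK_one p n M' d k
    | succ m ih =>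
      rw [pow_succ]
      have := WK_mul p n M' d k ih hres
      rwa [add_zero] at this

end WeightDet

section LowDegree

variable (σ : Type)

/-- Polynomials all of whose monomials have total degree `≥ d`. -/
def lowIdeal (d : ℕ) : Ideal (MvPolynomial σ ℚ) where
  carrier := {g | ∀ μ : σ →₀ ℕ, (μ.sum fun _ e => e) < d → MvPolynomial.coeff μ g = 0}
  add_mem' := by
    intro a b ha hb μ hμ
    rw [MvPolynomial.coeff_add, ha μ hμ, hb μ hμ, add_zero]
  zero_mem' := by
    intro μ _
    rw [MvPolynomial.coeff_zero]
  smul_mem' := by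
    intro c x hx μ hμ
    rw [smul_eq_mul, MvPolynomial.coeff_mul]
    apply Finset.sum_eq_zero
    intro ij hij
    rw [Finset.HasAntidiagonal.mem_antidiagonal] at hij
    have hdeg : (ij.2.sum fun _ e => e) < d := by
      have hμ2 : ((ij.1 + ij.2).sum fun (_ : σ) (e : ℕ) => e) =
          (ij.1.sum fun _ e => e) + (ij.2.sum fun _ e => e) :=
        Finsupp.sum_add_index' (fun _ => rfl) (fun _ _ _ => rfl)
      rw [hij] at hμ2
      omega
    rw [hx ij.2 hdeg, mul_zero]

theorem lowIdeal_mul_le (a b : ℕ) : lowIdeal σ a * lowIdeal σ b ≤ lowIdeal σ (a + b) := by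
  rw [Ideal.mul_le]
  intro r hr s hs μ hμ
  rw [MvPolynomial.coeff_mul]
  apply Finset.sum_eq_zero
  intro ij hij
  rw [Finset.HasAntidiagonal.mem_antidiagonal] at hij
  have hμ2 : ((ij.1 + ij.2).sum fun (_ : σ) (e : ℕ) => e) =
      (ij.1.sum fun _ e => e) + (ij.2.sum fun _ e => e) :=
    Finsupp.sum_add_index' (fun _ => rfl) (fun _ _ _ => rfl)
  rw [hij] at hμ2
  by_cases h1 : (ij.1.sum fun _ e => e) < a
  · rw [hr ij.1 h1, zero_mul]
  · have h2 : (ij.2.sum fun _ e => e) < b := by omega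
    rw [hs ij.2 h2, mul_zero]

theorem lowIdeal_pow_le (t : ℕ) : (lowIdeal σ 1) ^ t ≤ lowIdeal σ t := by
  induction t with
  | zero =>
    intro x _ μ hμ
    omega
  | succ t ih =>
    have h1 : (lowIdeal σ 1) ^ (t + 1) = (lowIdeal σ 1) ^ t * lowIdeal σ 1 := pow_succ _ _
    rw [h1]
    calc (lowIdeal σ 1) ^ t * lowIdeal σ 1 ≤ lowIdeal σ t * lowIdeal σ 1 :=
          Ideal.mul_mono_left ih
      _ ≤ lowIdeal σ (t + 1) := lowIdeal_mul_le σ t 1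

end LowDegree

section PolyIdealLow

variable (p n : ℕ) (M' : Finset (VarIdx p n))

theorem polyIdeal_le_lowIdeal : polyIdeal p n M' ≤ lowIdeal {s // s ∈ M'} 1 := by
  rw [polyIdeal, Ideal.span_le]
  rintro _ ⟨s, rfl⟩
  intro μ hμ
  have hμ0 : μ = 0 := by
    ext t
    have h1 : ∑ t ∈ μ.support, μ t = 0 := by
      simp only [Finsupp.sum] at hμ
      omega
    rw [Finset.sum_eq_zero_iff] at h1
    by_cases ht : t ∈ μ.support
    · exact h1 t ht
    · exact Finsupp.notMem_support_iff.mp ht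
  rw [hμ0, MvPolynomial.coeff_zero_X]

theorem polyIdeal_pow_coeff_eq_zero (d : ℕ) {g : MvPolynomial {s // s ∈ M'} ℚ}
    (hg : g ∈ (polyIdeal p n M') ^ d) (μ : {s // s ∈ M'} →₀ ℕ)
    (hμ : (μ.sum fun _ e => e) < d) : MvPolynomial.coeff μ g = 0 := by
  have h1 : (polyIdeal p n M') ^ d ≤ lowIdeal {s // s ∈ M'} d :=
    le_trans (Ideal.pow_right_mono (polyIdeal_le_lowIdeal p n M') d) (lowIdeal_pow_le _ d)
  exact h1 hg μ hμ

end PolyIdealLow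

section Transfer

theorem sum_subtypeDomain_support {ι γ : Type*} [AddCommMonoid γ] (m : ι →₀ ℕ)
    (g : ι → ℕ → γ) :
    (m.subtypeDomain (· ∈ m.support)).sum (fun s e => g (s : ι) e) = m.sum g := by
  classical
  rw [Finsupp.sum, Finsupp.sum, Finsupp.support_subtypeDomain]
  have hset : m.support.subtype (· ∈ m.support) = m.support.attach := by
    ext a
    simp [Finset.mem_subtype]
  rw [hset, ← Finset.sum_attach m.support (fun t => g t (m t))]
  apply Finset.sum_congr rfl
  intro s _
  rw [Finsupp.subtypeDomain_apply]

end Transfer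

/-! ## Statement 15 -/

/-- In the setting of the universal power series
`φ_{n,j₁…j_q} ∈ ℚ[[x_{i,l} : 1 ≤ i ≤ p, l ∈ ℤⁿ]]` determined by the compatible system
`(φ^{(M′,d)})`, assign to `x_{i,l}` the weight `l ∈ ℤⁿ`. Then every monomial occurring
with nonzero coefficient in `φ_{n,j₁…j_q}` has weight `0 ∈ ℤⁿ`. -/
theorem statement15 (n p q : ℕ) (hn : 1 ≤ n) (hp : 1 ≤ p) (hpq : p + q = n + 1)
    (j : Fin q → Fin n) (hj : StrictMono j)
    (Φ : MvPowerSeries (VarIdx p n) ℚ) (hΦ : IsUniversalCC p n q hp hpq j Φ) :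
    ∀ m : VarIdx p n →₀ ℕ, MvPowerSeries.coeff m Φ ≠ 0 →
      (m.sum fun s k => (k : ℤ) • s.2) = (0 : Fin n → ℤ) := by
  classical
  intro m₀ hc
  have hd1 : 1 ≤ (m₀.sum fun _ e => e) + 1 := by omega
  have hphi := hΦ m₀.support ((m₀.sum fun _ e => e) + 1) hd1
  -- `m₀` belongs to the truncation exponent set
  have hm0mem : m₀ ∈ expSet p n m₀.support ((m₀.sum fun _ e => e) + 1) := by
    rw [expSet, Finset.mem_filter]
    refine ⟨?_, by omega⟩
    rw [Finset.mem_image]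
    refine ⟨fun s => ⟨m₀ (s : VarIdx p n), ?_⟩, Finset.mem_univ _, ?_⟩
    · have hle : m₀ (s : VarIdx p n) ≤ m₀.sum fun _ e => e := by
        have h2 := Finset.single_le_sum (f := fun t => m₀ t)
          (fun t _ => Nat.zero_le _) s.2
        simpa [Finsupp.sum] using h2
      omega
    · show ∑ s ∈ m₀.support.attach,
        Finsupp.single (s : VarIdx p n) (m₀ (s : VarIdx p n)) = m₀
      rw [Finset.sum_attach m₀.support (fun t => Finsupp.single t (m₀ t))]
      exact Finsupp.sum_single m₀
  -- elements of the exponent set have support inside `m₀.support`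
  have hsuppexp : ∀ m ∈ expSet p n m₀.support ((m₀.sum fun _ e => e) + 1),
      m.support ⊆ m₀.support := by
    intro m hm
    rw [expSet, Finset.mem_filter, Finset.mem_image] at hm
    obtain ⟨⟨g, _, rfl⟩, _⟩ := hm
    refine Finsupp.support_finset_sum.trans ?_
    intro t ht
    rw [Finset.mem_biUnion] at ht
    obtain ⟨s, _, hts⟩ := ht
    have h3 := Finsupp.support_single_subset hts
    rw [Finset.mem_singleton] at h3
    rw [h3]
    exact s.2
  -- the relevant coefficient of the truncation
  have hcoeffT : MvPolynomial.coeff (m₀.subtypeDomain (· ∈ m₀.support))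
      (truncPoly p n m₀.support ((m₀.sum fun _ e => e) + 1) Φ) =
      MvPowerSeries.coeff m₀ Φ := by
    rw [truncPoly, MvPolynomial.coeff_sum]
    rw [Finset.sum_eq_single_of_mem m₀ hm0mem ?_]
    · rw [MvPolynomial.coeff_monomial, if_pos rfl]
    · intro m hm hne
      rw [MvPolynomial.coeff_monomial, if_neg]
      intro he
      apply hne
      ext t
      by_cases hts : t ∈ m₀.support
      · have h4 := DFunLike.congr_fun he (⟨t, hts⟩ : {s // s ∈ m₀.support})
        rw [Finsupp.subtypeDomain_apply, Finsupp.subtypeDomain_apply] at h4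
        exact h4
      · have h1 : m t = 0 :=
          Finsupp.notMem_support_iff.mp (fun hc2 => hts (hsuppexp m hm hc2))
        have h2 : m₀ t = 0 := Finsupp.notMem_support_iff.mp hts
        rw [h1, h2]
  have hdeg : ((m₀.subtypeDomain (· ∈ m₀.support)).sum fun _ e => e) =
      m₀.sum fun _ e => e :=
    sum_subtypeDomain_support m₀ (fun _ e => e)
  -- the weights of `μ₀` all vanish
  have hwt : ∀ k : Fin n,
      wtk p n m₀.support k (m₀.subtypeDomain (· ∈ m₀.support)) = 0 := by
    intro k
    by_contra hne
    have hmem : Ideal.Quotient.mk ((polyIdeal p n m₀.support) ^ ((m₀.sum fun _ e => e) + 1))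
        (truncPoly p n m₀.support ((m₀.sum fun _ e => e) + 1) Φ)
        ∈ WK p n m₀.support ((m₀.sum fun _ e => e) + 1) k 0 := by
      rw [hphi]
      exact phiMd_mem_WK p n q hp hpq j m₀.support _ hd1 k
    rw [WK] at hmem
    replace hmem : (Ideal.Quotient.mk ((polyIdeal p n m₀.support) ^ ((m₀.sum fun _ e => e) + 1))
        (truncPoly p n m₀.support ((m₀.sum fun _ e => e) + 1) Φ) :
          BRing p n m₀.support ((m₀.sum fun _ e => e) + 1)) ∈
        Submodule.span ℚ {x : BRing p n m₀.support ((m₀.sum fun _ e => e) + 1) |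
          ∃ μ, wtk p n m₀.support k μ = 0 ∧
            x = Ideal.Quotient.mk ((polyIdeal p n m₀.support) ^ ((m₀.sum fun _ e => e) + 1))
              (MvPolynomial.monomial μ (1 : ℚ))} := hmem
    have himg : {x : BRing p n m₀.support ((m₀.sum fun _ e => e) + 1) |
        ∃ μ, wtk p n m₀.support k μ = 0 ∧
          x = Ideal.Quotient.mk ((polyIdeal p n m₀.support) ^ ((m₀.sum fun _ e => e) + 1))
            (MvPolynomial.monomial μ (1 : ℚ))} =
        ⇑(Ideal.Quotient.mkₐ ℚ ((polyIdeal p n m₀.support) ^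
            ((m₀.sum fun _ e => e) + 1))).toLinearMap ''
          {g | ∃ μ, wtk p n m₀.support k μ = 0 ∧ g = MvPolynomial.monomial μ (1 : ℚ)} := by
      ext x
      constructor
      · rintro ⟨μ, hμ, rfl⟩
        exact ⟨MvPolynomial.monomial μ 1, ⟨μ, hμ, rfl⟩,
          by rw [AlgHom.toLinearMap_apply, Ideal.Quotient.mkₐ_eq_mk]⟩
      · rintro ⟨g, ⟨μ, hμ, rfl⟩, rfl⟩
        exact ⟨μ, hμ, by rw [AlgHom.toLinearMap_apply, Ideal.Quotient.mkₐ_eq_mk]⟩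
    rw [himg] at hmem
    have hmem2 : Ideal.Quotient.mk ((polyIdeal p n m₀.support) ^ ((m₀.sum fun _ e => e) + 1))
        (truncPoly p n m₀.support ((m₀.sum fun _ e => e) + 1) Φ) ∈ Submodule.map ((Ideal.Quotient.mkₐ ℚ ((polyIdeal p n m₀.support) ^
        ((m₀.sum fun _ e => e) + 1))).toLinearMap)
        (Submodule.span ℚ {g | ∃ μ, wtk p n m₀.support k μ = 0 ∧
          g = MvPolynomial.monomial μ (1 : ℚ)}) := by
      rw [Submodule.map_span]; exact hmem
    obtain ⟨g, hg, hgeq⟩ := Submodule.mem_map.mp hmem2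
    have hgeq' : Ideal.Quotient.mk ((polyIdeal p n m₀.support) ^ ((m₀.sum fun _ e => e) + 1)) g
        = Ideal.Quotient.mk ((polyIdeal p n m₀.support) ^ ((m₀.sum fun _ e => e) + 1))
          (truncPoly p n m₀.support ((m₀.sum fun _ e => e) + 1) Φ) := by
      rwa [AlgHom.toLinearMap_apply, Ideal.Quotient.mkₐ_eq_mk] at hgeq
    have hsub : g - truncPoly p n m₀.support ((m₀.sum fun _ e => e) + 1) Φ
        ∈ (polyIdeal p n m₀.support) ^ ((m₀.sum fun _ e => e) + 1) :=
      Ideal.Quotient.eq.mp hgeq'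
    have hlowc := polyIdeal_pow_coeff_eq_zero p n m₀.support ((m₀.sum fun _ e => e) + 1)
      hsub (m₀.subtypeDomain (· ∈ m₀.support)) (by rw [hdeg]; omega)
    have hgc : MvPolynomial.coeff (m₀.subtypeDomain (· ∈ m₀.support)) g = 0 := by
      refine Submodule.span_induction ?_ ?_ ?_ ?_ hg
      · rintro x ⟨μ, hμ, rfl⟩
        rw [MvPolynomial.coeff_monomial, if_neg]
        intro he
        exact hne (he ▸ hμ)
      · exact MvPolynomial.coeff_zero _
      · intro x y _ _ hx hy
        rw [MvPolynomial.coeff_add, hx, hy, add_zero]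
      · intro a x _ hx
        rw [MvPolynomial.coeff_smul, hx, smul_zero]
    rw [MvPolynomial.coeff_sub, hgc, zero_sub, neg_eq_zero, hcoeffT] at hlowc
    exact hc hlowc
  -- translate the weight statement into the required form
  funext k
  have h1 := hwt k
  rw [wtk, sum_subtypeDomain_support m₀
    (fun s e => (e : ℤ) * s.2 k)] at h1
  show (m₀.sum fun s e => (e : ℤ) • s.2) k = 0
  rw [Finsupp.sum, Finset.sum_apply]
  rw [Finsupp.sum] at h1
  rw [← h1]
  apply Finset.sum_congr rfl
  intro s _
  rw [Pi.smul_apply, smul_eq_mul]
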